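/- The value of the Lobachevsky function at π/4 is half of Catalan's constant: Λ(π/4) = (1/2) ∑_{n=0}^∞ (-1)^n/(2n+1)². -/

import Mathlib

open MeasureTheory Real intervalIntegral Set Filter Topology

namespace LobachevskyAux

lemma abs_log_le {t : ℝ} (h1 : 0 < t) (h2 : t ≤ 2) : |log t| ≤ 2 * t ^ (-(1/2) : ℝ) := by
  have hrp : (0:ℝ) < t ^ (-(1/2) : ℝ) := rpow_pos_of_pos h1 _
  have hlog : log (t ^ (-(1/2):ℝ)) = -(1/2) * log t := log_rpow h1 _
  have hle : log (t ^ (-(1/2):ℝ)) ≤ t ^ (-(1/2):ℝ) - 1 := log_le_sub_one_of_pos hrp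
  rcases le_or_gt t 1 with h | h
  · rw [abs_of_nonpos (log_nonpos h1.le h)]
    linarith
  · rw [abs_of_nonneg (log_nonneg h.le)]
    have hlt : log t ≤ t - 1 := log_le_sub_one_of_pos h1
    have hs : t ^ (-(1/2):ℝ) = (Real.sqrt t)⁻¹ := by
      rw [Real.rpow_neg h1.le, ← Real.sqrt_eq_rpow]
    have hsq : Real.sqrt t ≤ 2 := by
      have : Real.sqrt t ≤ Real.sqrt 4 := Real.sqrt_le_sqrt (by linarith)
      rwa [show (4:ℝ) = 2^2 by norm_num, Real.sqrt_sq (by norm_num : (0:ℝ) ≤ 2)] at this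
    have hsp : 0 < Real.sqrt t := Real.sqrt_pos.2 h1
    have : (1:ℝ)/2 ≤ (Real.sqrt t)⁻¹ := by
      rw [one_div, inv_le_inv₀ (by norm_num) hsp] at *
      · exact hsq
    rw [hs]; linarith

lemma integrable_of_abs_log_bound {f : ℝ → ℝ} {c C : ℝ} (hc : 0 < c) (hc2 : c ≤ 2)
    (hC : 0 ≤ C) (hm : Measurable f) (h : ∀ t ∈ Ioc (0:ℝ) c, |f t| ≤ |log t| + C) :
    IntervalIntegrable f volume 0 c := by
  have hg : IntervalIntegrable (fun t : ℝ => 2 * t ^ (-(1/2):ℝ) + C) volume 0 c :=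
    ((intervalIntegrable_rpow' (by norm_num)).const_mul 2).add intervalIntegrable_const
  rw [intervalIntegrable_iff, uIoc_of_le hc.le] at hg ⊢
  refine hg.integrable.mono' hm.aestronglyMeasurable ?_
  rw [ae_restrict_iff' measurableSet_Ioc]
  refine .of_forall fun t ht => ?_
  have h1 := abs_log_le ht.1 (ht.2.trans hc2)
  calc ‖f t‖ = |f t| := rfl
    _ ≤ |log t| + C := h t ht
    _ ≤ 2 * t ^ (-(1/2):ℝ) + C := by linarith

lemma il_pow_log (k : ℕ) : IntervalIntegrable (fun x : ℝ => x ^ k * log x) volume 0 1 := by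
  refine integrable_of_abs_log_bound one_pos (by norm_num) le_rfl
    ((measurable_id.pow_const k).mul Real.measurable_log) fun t ht => ?_
  rw [abs_mul, abs_pow, abs_of_nonneg ht.1.le, add_zero]
  calc t ^ k * |log t| ≤ 1 * |log t| := by
        apply mul_le_mul_of_nonneg_right (pow_le_one₀ ht.1.le ht.2) (abs_nonneg _)
    _ = |log t| := one_mul _

lemma il_log : IntervalIntegrable log volume 0 1 := by
  simpa using il_pow_log 0

lemma il_log2sin : IntervalIntegrable (fun t : ℝ => log (2 * sin t)) volume 0 (π/2) := by
  refine integrable_of_abs_log_bound (by positivity) (by nlinarith [pi_lt_d2])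
    (log_nonneg one_le_two) (Real.measurable_log.comp ((continuous_const.mul continuous_sin).measurable))
    fun t ht => ?_
  have hsp : 0 < sin t := sin_pos_of_pos_of_lt_pi ht.1 (by nlinarith [pi_pos, ht.2])
  have hub : 2 * sin t ≤ 2 * t := by nlinarith [Real.sin_lt ht.1]
  have hlb : t ≤ 2 * sin t := by
    have h := Real.mul_le_sin ht.1.le ht.2
    have hp : (0:ℝ) < π := pi_pos
    have h4 : π ≤ 4 := by nlinarith [pi_lt_d2]
    have : t / 2 ≤ 2 / π * t := by
      rw [div_le_iff₀ (by norm_num : (0:ℝ) < 2), div_mul_eq_mul_div, div_mul_eq_mul_div,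
        le_div_iff₀ hp]
      nlinarith [ht.1.le]
    linarith
  have h1 : log (2 * sin t) ≤ log 2 + log t := by
    rw [← log_mul two_ne_zero ht.1.ne']
    exact log_le_log (by positivity) hub
  have h2 : log t ≤ log (2 * sin t) := log_le_log ht.1 hlb
  rw [abs_le]
  constructor
  · have := neg_abs_le (log t); linarith
  · have := le_abs_self (log t); linarith

lemma J (k : ℕ) : ∫ x in (0:ℝ)..1, x ^ k * log x = -(1 / ((k:ℝ)+1)^2) := by
  set c : ℝ := (k:ℝ) + 1 with hc
  have hc0 : c ≠ 0 := by positivity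
  set f : ℝ → ℝ := fun x => x ^ (k+1) * log x / c - x ^ (k+1) / c ^ 2 with hf
  have hderiv : ∀ x ∈ Ioo (0:ℝ) 1, HasDerivAt f (x ^ k * log x) x := by
    intro x hx
    have hp : HasDerivAt (fun x : ℝ => x ^ (k+1)) (c * x ^ k) x := by
      simpa [hc] using hasDerivAt_pow (k+1) x
    have hl : HasDerivAt log x⁻¹ x := Real.hasDerivAt_log hx.1.ne'
    have h1 : HasDerivAt (fun x => x ^ (k+1) * log x) (c * x ^ k * log x + x ^ (k+1) * x⁻¹) x :=
      hp.mul hl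
    have h2 := (h1.div_const c).sub (hp.div_const (c ^ 2))
    refine h2.congr_deriv ?_
    have : x ^ (k+1) * x⁻¹ = x ^ k := by
      rw [pow_succ, mul_assoc, mul_inv_cancel₀ hx.1.ne', mul_one]
    rw [this]
    field_simp
    ring
  have hint : IntervalIntegrable (fun x : ℝ => x ^ k * log x) volume 0 1 := il_pow_log k
  have h0 : Tendsto f (𝓝[>] (0:ℝ)) (𝓝 0) := by
    have h1 : Tendsto (fun x : ℝ => x ^ (k+1) * log x / c) (𝓝[>] (0:ℝ)) (𝓝 0) := by
      have hbase : Tendsto (fun x : ℝ => log x * x ^ ((k:ℝ)+1)) (𝓝[>] (0:ℝ)) (𝓝 0) :=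
        tendsto_log_mul_rpow_nhdsGT_zero (by positivity)
      have : Tendsto (fun x : ℝ => x ^ (k+1) * log x) (𝓝[>] (0:ℝ)) (𝓝 0) := by
        refine hbase.congr' ?_
        filter_upwards [self_mem_nhdsWithin] with x hx
        rw [mul_comm, ← Real.rpow_natCast x (k+1)]
        push_cast
        ring_nf
      simpa using this.div_const c
    have h2 : Tendsto (fun x : ℝ => x ^ (k+1) / c ^ 2) (𝓝[>] (0:ℝ)) (𝓝 0) := by
      have : Tendsto (fun x : ℝ => x ^ (k+1) / c ^ 2) (𝓝 (0:ℝ)) (𝓝 ((0:ℝ) ^ (k+1) / c ^ 2)) := by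
        exact ((continuous_pow (k+1)).div_const _).tendsto 0
      simpa [zero_pow (Nat.succ_ne_zero k)] using this.mono_left nhdsWithin_le_nhds
    simpa using h1.sub h2
  have h1 : Tendsto f (𝓝[<] (1:ℝ)) (𝓝 (-(1 / c ^ 2))) := by
    have hco : ContinuousAt f 1 := by
      have : ContinuousAt log 1 := Real.continuousAt_log one_ne_zero
      fun_prop (disch := norm_num)
    have := hco.continuousWithinAt (s := Iio (1:ℝ))
    have hval : f 1 = -(1 / c ^ 2) := by simp [hf]
    rw [ContinuousWithinAt, hval] at this
    exact this
  have := intervalIntegral.integral_eq_sub_of_hasDerivAt_of_tendsto one_pos hderiv hint h0 h1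
  rw [this, hc]
  ring

lemma summable_inv_sq : Summable fun n : ℕ => (1:ℝ) / (2 * (n:ℝ) + 1) ^ 2 := by
  have h2 : Summable fun n : ℕ => (1:ℝ) / ((n:ℝ) + 1) ^ 2 := by
    have := (Real.summable_one_div_nat_pow (p := 2)).2 one_lt_two
    have h := (summable_nat_add_iff 1).2 this
    refine h.congr fun n => ?_
    push_cast
    ring
  refine Summable.of_nonneg_of_le (fun n => by positivity) (fun n => ?_) h2
  apply one_div_le_one_div_of_le (by positivity)
  have hn : (0:ℝ) ≤ (n:ℝ) := Nat.cast_nonneg n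
  nlinarith

lemma series_eval : ∫ x in (0:ℝ)..1, log x / (1 + x ^ 2)
    = -∑' n : ℕ, (-1:ℝ) ^ n / (2 * n + 1) ^ 2 := by
  set μ : Measure ℝ := volume.restrict (Ioo 0 1) with hμ
  set F : ℕ → ℝ → ℝ := fun n x => (-1:ℝ) ^ n * (x ^ (2*n) * log x) with hF
  have hIoo : ∀ k : ℕ, IntegrableOn (fun x : ℝ => x ^ k * log x) (Ioo 0 1) volume := by
    intro k
    have := (il_pow_log k)
    rw [intervalIntegrable_iff_integrableOn_Ioo_of_le zero_le_one] at this
    exact this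
  have hFint : ∀ n : ℕ, Integrable (F n) μ := fun n => ((hIoo (2*n)).const_mul _)
  have hJoo : ∀ k : ℕ, ∫ x in Ioo (0:ℝ) 1, x ^ k * log x = -(1 / ((k:ℝ)+1)^2) := by
    intro k
    rw [← MeasureTheory.integral_Ioc_eq_integral_Ioo,
      ← intervalIntegral.integral_of_le zero_le_one, J k]
  have hnorm : ∀ n : ℕ, ∫ x, ‖F n x‖ ∂μ = 1 / (2 * (n:ℝ) + 1) ^ 2 := by
    intro n
    have hcg : ∀ x ∈ Ioo (0:ℝ) 1, ‖F n x‖ = -(x ^ (2*n) * log x) := by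
      intro x hx
      have hlx : log x ≤ 0 := log_nonpos hx.1.le hx.2.le
      have h1 : ‖F n x‖ = |x| ^ (2*n) * |log x| := by
        rw [hF]; simp [abs_mul, abs_pow]
      rw [h1, abs_of_nonneg hx.1.le, abs_of_nonpos hlx]
      ring
    rw [hμ, setIntegral_congr_fun measurableSet_Ioo hcg, MeasureTheory.integral_neg, hJoo (2*n)]
    push_cast
    ring_nf
  have hsum : Summable fun n : ℕ => ∫ x, ‖F n x‖ ∂μ :=
    Summable.congr summable_inv_sq (fun n => (hnorm n).symm)
  have hkey := MeasureTheory.integral_tsum_of_summable_integral_norm hFint hsum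
  have hL : ∫ x, (∑' n, F n x) ∂μ = ∫ x in (0:ℝ)..1, log x / (1 + x ^ 2) := by
    rw [intervalIntegral.integral_of_le zero_le_one, MeasureTheory.integral_Ioc_eq_integral_Ioo,
      hμ]
    apply setIntegral_congr_fun measurableSet_Ioo
    intro x hx
    have hx2 : ‖-x ^ 2‖ < 1 := by
      rw [norm_neg, norm_pow, Real.norm_eq_abs, abs_of_nonneg hx.1.le]
      nlinarith [hx.1, hx.2]
    have hgeom := tsum_geometric_of_norm_lt_one hx2
    calc ∑' n, F n x = ∑' n : ℕ, log x * (-x ^ 2) ^ n := by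
          refine tsum_congr fun n => ?_
          rw [hF, neg_pow, ← pow_mul]
          ring
      _ = log x * ∑' n : ℕ, (-x ^ 2) ^ n := tsum_mul_left
      _ = log x * (1 - (-x ^ 2))⁻¹ := by rw [hgeom]
      _ = log x / (1 + x ^ 2) := by rw [sub_neg_eq_add, div_eq_mul_inv]
  have hR : ∀ n : ℕ, ∫ x, F n x ∂μ = -((-1:ℝ) ^ n / (2 * (n:ℝ) + 1) ^ 2) := by
    intro n
    rw [hμ, hF]
    simp only
    rw [MeasureTheory.integral_const_mul, hJoo (2*n)]
    push_cast
    ring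
  rw [← hL, ← hkey, tsum_congr hR, tsum_neg]

lemma pi4_pos : (0:ℝ) < π/4 := by positivity
lemma pi4_lt_pi2 : (π:ℝ)/4 < π/2 := by linarith [pi_pos]

lemma cos_pos_on {t : ℝ} (h0 : 0 ≤ t) (h1 : t ≤ π/4) : 0 < cos t :=
  Real.cos_pos_of_mem_Ioo ⟨by linarith [pi_pos], lt_of_le_of_lt h1 pi4_lt_pi2⟩

lemma il_log2cos : IntervalIntegrable (fun t : ℝ => log (2 * cos t)) volume 0 (π/4) := by
  apply ContinuousOn.intervalIntegrable
  rw [uIcc_of_le pi4_pos.le]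
  apply ContinuousOn.log ((continuous_const.mul continuous_cos).continuousOn)
  intro t ht
  have := cos_pos_on ht.1 ht.2
  exact (mul_pos two_pos this).ne'

lemma il_log2sin' : IntervalIntegrable (fun t : ℝ => log (2 * sin t)) volume 0 (π/4) := by
  apply il_log2sin.mono_set
  rw [uIcc_of_le pi4_pos.le, uIcc_of_le (by positivity : (0:ℝ) ≤ π/2)]
  exact Icc_subset_Icc le_rfl pi4_lt_pi2.le

lemma logtan_eq {t : ℝ} (h0 : 0 < t) (h1 : t ≤ π/4) :
    log (tan t) = log (2 * sin t) - log (2 * cos t) := by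
  have hs : 0 < sin t := sin_pos_of_pos_of_lt_pi h0 (by linarith [pi_pos])
  have hc : 0 < cos t := cos_pos_on h0.le h1
  rw [Real.tan_eq_sin_div_cos, log_div hs.ne' hc.ne', log_mul two_ne_zero hs.ne',
    log_mul two_ne_zero hc.ne']
  ring

lemma il_logtan : IntervalIntegrable (fun t : ℝ => log (tan t)) volume 0 (π/4) := by
  rw [intervalIntegrable_iff_integrableOn_Ioc_of_le pi4_pos.le]
  have h1 : IntegrableOn (fun t : ℝ => log (2 * sin t) - log (2 * cos t)) (Ioc 0 (π/4))
      volume := by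
    apply Integrable.sub
    · exact (intervalIntegrable_iff_integrableOn_Ioc_of_le pi4_pos.le).1 il_log2sin'
    · exact (intervalIntegrable_iff_integrableOn_Ioc_of_le pi4_pos.le).1 il_log2cos
  exact h1.congr_fun (fun t ht => (logtan_eq ht.1 ht.2).symm) measurableSet_Ioc

lemma tan_mem_Icc {t : ℝ} (h0 : 0 ≤ t) (h1 : t ≤ π/4) : tan t ∈ Icc (0:ℝ) 1 := by
  constructor
  · exact Real.tan_nonneg_of_nonneg_of_le_pi_div_two h0 (by linarith [pi4_lt_pi2])
  · have := Real.strictMonoOn_tan.monotoneOn (a := t) (b := π/4)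
      ⟨by linarith [pi_pos], lt_of_le_of_lt h1 pi4_lt_pi2⟩
      ⟨by linarith [pi_pos], pi4_lt_pi2⟩ h1
    rwa [Real.tan_pi_div_four] at this

lemma integrableOn_g : IntegrableOn (fun x : ℝ => log x / (1 + x ^ 2)) (Icc 0 1) volume := by
  have hlog : IntegrableOn Real.log (Icc (0:ℝ) 1) volume := by
    rw [integrableOn_Icc_iff_integrableOn_Ioc]
    exact (intervalIntegrable_iff_integrableOn_Ioc_of_le zero_le_one).1 il_log
  have := hlog.smul_continuousOn (g := fun x : ℝ => (1 + x ^ 2)⁻¹)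
    (((continuous_const.add (continuous_pow 2)).continuousOn).inv₀
      (fun x _ => by have : (0:ℝ) < 1 + x ^ 2 := by positivity
                     exact this.ne')) isCompact_Icc
  simpa [div_eq_mul_inv, smul_eq_mul] using this

lemma subst_tan : ∫ t in (0:ℝ)..(π/4), log (tan t) = ∫ x in (0:ℝ)..1, log x / (1 + x ^ 2) := by
  have hmin : min (0:ℝ) (π/4) = 0 := min_eq_left pi4_pos.le
  have hmax : max (0:ℝ) (π/4) = π/4 := max_eq_right pi4_pos.le
  have huIcc : (Set.uIcc (0:ℝ) (π/4)) = Icc 0 (π/4) := uIcc_of_le pi4_pos.le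
  set g : ℝ → ℝ := fun x => log x / (1 + x ^ 2) with hg
  have hcosne : ∀ t ∈ Icc (0:ℝ) (π/4), cos t ≠ 0 := fun t ht => (cos_pos_on ht.1 ht.2).ne'
  have hf : ContinuousOn tan (Set.uIcc (0:ℝ) (π/4)) := by
    rw [huIcc]; exact Real.continuousOn_tan.mono fun t ht => hcosne t ht
  have hff' : ∀ x ∈ Ioo (min (0:ℝ) (π/4)) (max (0:ℝ) (π/4)),
      HasDerivWithinAt tan (1 / cos x ^ 2) (Ioi x) x := by
    rw [hmin, hmax]
    intro x hx
    exact (Real.hasDerivAt_tan (hcosne x ⟨hx.1.le, hx.2.le⟩)).hasDerivWithinAt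
  have hg_cont : ContinuousOn g (tan '' Ioo (min (0:ℝ) (π/4)) (max (0:ℝ) (π/4))) := by
    have hsub : tan '' Ioo (min (0:ℝ) (π/4)) (max (0:ℝ) (π/4)) ⊆ Ioi 0 := by
      rw [hmin, hmax]
      rintro _ ⟨t, ht, rfl⟩
      exact Real.tan_pos_of_pos_of_lt_pi_div_two ht.1 (lt_of_lt_of_le ht.2 pi4_lt_pi2.le)
    refine ContinuousOn.mono ?_ hsub
    apply ContinuousOn.div
    · exact Real.continuousOn_log.mono fun x hx => ne_of_gt hx
    · exact (continuous_const.add (continuous_pow 2)).continuousOn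
    · intro x _; positivity
  have hg1 : IntegrableOn g (tan '' (Set.uIcc (0:ℝ) (π/4))) volume := by
    apply integrableOn_g.mono_set
    rw [huIcc]
    rintro _ ⟨t, ht, rfl⟩
    exact tan_mem_Icc ht.1 ht.2
  have heq : ∀ t ∈ (Set.uIcc (0:ℝ) (π/4)), (1 / cos t ^ 2) • (g ∘ tan) t = log (tan t) := by
    intro t ht
    rw [huIcc] at ht
    have hc := hcosne t ht
    have : (1:ℝ) + tan t ^ 2 = 1 / cos t ^ 2 := by
      rw [eq_div_iff (by positivity), ← Real.inv_one_add_tan_sq hc, mul_inv_cancel₀]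
      positivity
    simp only [Function.comp, hg, smul_eq_mul]
    rw [← this]
    field_simp
  have hg2 : IntegrableOn (fun x => (1 / cos x ^ 2) • (g ∘ tan) x) (Set.uIcc (0:ℝ) (π/4)) volume := by
    rw [huIcc, integrableOn_Icc_iff_integrableOn_Ioc]
    have := (intervalIntegrable_iff_integrableOn_Ioc_of_le pi4_pos.le).1 il_logtan
    apply this.congr_fun ?_ measurableSet_Ioc
    intro t ht
    exact (heq t (by rw [huIcc]; exact ⟨ht.1.le, ht.2⟩)).symm
  have hmain := intervalIntegral.integral_comp_smul_deriv''' hf hff' hg_cont hg1 hg2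
  rw [Real.tan_zero, Real.tan_pi_div_four] at hmain
  rw [← hmain]
  apply intervalIntegral.integral_congr
  intro t ht
  exact (heq t ht).symm

end LobachevskyAux

/-- The Lobachevsky function `Λ(θ) = -∫₀^θ log |2 sin t| dt`. -/
noncomputable def lobachevsky (θ : ℝ) : ℝ :=
  -∫ t in (0:ℝ)..θ, Real.log |2 * Real.sin t|

open LobachevskyAux

/-- Λ(π/4) equals half of Catalan's constant ∑_{n=0}^∞ (-1)^n/(2n+1)². -/
theorem lobachevsky_pi_div_four :
    lobachevsky (Real.pi / 4) =
      (1 / 2) * ∑' n : ℕ, (-1 : ℝ) ^ n / (2 * n + 1) ^ 2 := by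
  set K : ℝ := ∑' n : ℕ, (-1 : ℝ) ^ n / (2 * n + 1) ^ 2 with hK
  set A : ℝ := ∫ t in (0:ℝ)..(π/4), log (2 * sin t) with hA
  set B : ℝ := ∫ t in (0:ℝ)..(π/4), log (2 * cos t) with hB
  -- second half of the interval equals B
  have hil2 : IntervalIntegrable (fun t : ℝ => log (2 * sin t)) volume (π/4) (π/2) := by
    apply il_log2sin.mono_set
    rw [uIcc_of_le pi4_lt_pi2.le, uIcc_of_le (by positivity : (0:ℝ) ≤ π/2)]
    exact Icc_subset_Icc pi4_pos.le le_rfl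
  have h2' : ∫ t in (π/4)..(π/2), log (2 * sin t) = B := by
    have hcs := intervalIntegral.integral_comp_sub_left (a := (0:ℝ)) (b := π/4)
      (fun t => log (2 * sin t)) (π/2)
    rw [sub_zero, show (π:ℝ)/2 - π/4 = π/4 by ring] at hcs
    rw [← hcs, hB]
    apply intervalIntegral.integral_congr
    intro t _
    simp [Real.sin_pi_div_two_sub]
  have hsplit : A + ∫ t in (π/4)..(π/2), log (2 * sin t)
      = ∫ t in (0:ℝ)..(π/2), log (2 * sin t) :=
    intervalIntegral.integral_add_adjacent_intervals il_log2sin' hil2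
  have hdouble : A + B = ∫ t in (0:ℝ)..(π/4), log (2 * sin (2*t)) := by
    rw [hA, hB, ← intervalIntegral.integral_add il_log2sin' il_log2cos]
    apply intervalIntegral.integral_congr_ae
    refine .of_forall fun t ht => ?_
    rw [uIoc_of_le pi4_pos.le] at ht
    have hs : 0 < sin t := sin_pos_of_pos_of_lt_pi ht.1 (by linarith [pi_pos, ht.2])
    have hc : 0 < cos t := cos_pos_on ht.1.le ht.2
    rw [← log_mul (by positivity) (by positivity), show (2*sin t) * (2*cos t) = 2*(2*sin t*cos t) by ring,
      ← Real.sin_two_mul]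
  have hhalf : ∫ t in (0:ℝ)..(π/4), log (2 * sin (2*t))
      = (1/2) * ∫ t in (0:ℝ)..(π/2), log (2 * sin t) := by
    have := intervalIntegral.integral_comp_mul_left (a := (0:ℝ)) (b := π/4)
      (fun u => log (2 * sin u)) (two_ne_zero)
    rw [mul_zero, show (2:ℝ) * (π/4) = π/2 by ring] at this
    rw [this, smul_eq_mul]
    norm_num
  have hAB : A + B = 0 := by
    have : A + B = (1/2) * (A + B) := by
      conv_lhs => rw [hdouble, hhalf, ← hsplit, h2']
    linarith
  have hBA : B - A = K := by
    have hsub : B - A = ∫ t in (0:ℝ)..(π/4), (log (2 * cos t) - log (2 * sin t)) :=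
      (intervalIntegral.integral_sub il_log2cos il_log2sin').symm
    have hcongr : ∫ t in (0:ℝ)..(π/4), (log (2 * cos t) - log (2 * sin t))
        = ∫ t in (0:ℝ)..(π/4), -log (tan t) := by
      apply intervalIntegral.integral_congr_ae
      refine .of_forall fun t ht => ?_
      rw [uIoc_of_le pi4_pos.le] at ht
      rw [logtan_eq ht.1 ht.2]
      ring
    rw [hsub, hcongr, intervalIntegral.integral_neg, subst_tan, series_eval, neg_neg, hK]
  have hAval : A = -(1/2) * K := by linarith
  have hlob : lobachevsky (π/4) = -A := by
    rw [lobachevsky, hA]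
    congr 1
    apply intervalIntegral.integral_congr
    intro t ht
    rw [uIcc_of_le pi4_pos.le] at ht
    simp only
    rw [abs_of_nonneg]
    have : 0 ≤ sin t := sin_nonneg_of_nonneg_of_le_pi ht.1 (by linarith [pi_pos, ht.2])
    positivity
  rw [hlob, hAval]
  ring
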